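/- Entropy inequality for a = d (sufficiency part of the Entropy Inequalities theorem): Let (ρ, m, E) be a smooth solution of the regularized Euler system with fluxes 𝕘 = 𝔾 + f⊗u, 𝔾 : ∇u ≥ 0, h = l − ½|u|² f, f = a(ρ,e)∇ρ with a ≥ 0, and l = s_e^{−1}(e s_e − ρ s_ρ) f + d(ρ,e) ρ s_e^{−1} ∇s with d ≥ 0. If a(ρ,e) = d(ρ,e) for all (ρ,e), then for every generalized entropy ρ f(s) — i.e., every f ∈ C²(ℝ;ℝ) with f'(s) > 0 and f'(s) c_p(ρ,e)^{−1} − f''(s) > 0 at all states — the solution satisfies the pointwise entropy inequality ∂_t(ρ f(s)) + div( u ρ f(s) − d ρ ∇f(s) − a f(s) ∇ρ ) ≥ 0. -/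

import Mathlib

noncomputable section

open Real

/-- Partial derivative with respect to the first variable (`ρ`). -/
def D1 (f : ℝ × ℝ → ℝ) (x : ℝ × ℝ) : ℝ := fderiv ℝ f x (1, 0)

/-- Partial derivative with respect to the second variable (`e`). -/
def D2 (f : ℝ × ℝ → ℝ) (x : ℝ × ℝ) : ℝ := fderiv ℝ f x (0, 1)

/-- The state domain `(0,∞)²`. -/
def dom : Set (ℝ × ℝ) := {x : ℝ × ℝ | 0 < x.1 ∧ 0 < x.2}

/-- `s_ρ` -/
def sRho (s : ℝ × ℝ → ℝ) : ℝ × ℝ → ℝ := D1 s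

/-- `s_e` -/
def sE (s : ℝ × ℝ → ℝ) : ℝ × ℝ → ℝ := D2 s

/-- `s_{ρe}` -/
def sRhoE (s : ℝ × ℝ → ℝ) : ℝ × ℝ → ℝ := D1 (D2 s)

/-- `s_{ee}` -/
def sEE (s : ℝ × ℝ → ℝ) : ℝ × ℝ → ℝ := D2 (D2 s)

/-- The pressure `p := -ρ² s_ρ / s_e`. -/
def press (s : ℝ × ℝ → ℝ) (x : ℝ × ℝ) : ℝ := -x.1 ^ 2 * sRho s x / sE s x

/-- The temperature `T := 1 / s_e`. -/
def temp (s : ℝ × ℝ → ℝ) (x : ℝ × ℝ) : ℝ := (sE s x)⁻¹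

/-- `∂_ρ(ρ² s_ρ)` -/
def dRho2sRho (s : ℝ × ℝ → ℝ) (x : ℝ × ℝ) : ℝ :=
  deriv (fun r : ℝ => r ^ 2 * sRho s (r, x.2)) x.1

/-- `det Σ := ∂_ρ(ρ² s_ρ)·s_{ee} - ρ² s_{ρe}²`. -/
def detSigma (s : ℝ × ℝ → ℝ) (x : ℝ × ℝ) : ℝ :=
  dRho2sRho s x * sEE s x - x.1 ^ 2 * (sRhoE s x) ^ 2

/-- `p_ρ` -/
def pRho (s : ℝ × ℝ → ℝ) : ℝ × ℝ → ℝ := D1 (press s)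

/-- `p_e` -/
def pE (s : ℝ × ℝ → ℝ) : ℝ × ℝ → ℝ := D2 (press s)

/-- `T_ρ` -/
def tRho (s : ℝ × ℝ → ℝ) : ℝ × ℝ → ℝ := D1 (temp s)

/-- `T_e` -/
def tE (s : ℝ × ℝ → ℝ) : ℝ × ℝ → ℝ := D2 (temp s)

/-- The specific heat at constant pressure
`c_p := s_e⁻¹ (p_ρ s_e - p_e s_ρ) / (p_ρ T_e - p_e T_ρ)`. -/
def cP (s : ℝ × ℝ → ℝ) (x : ℝ × ℝ) : ℝ :=
  (sE s x)⁻¹ * (pRho s x * sE s x - pE s x * sRho s x) /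
    (pRho s x * tE s x - pE s x * tRho s x)

/-- The squared sound speed `c² := p_ρ - (s_ρ/s_e) p_e`. -/
def cSq (s : ℝ × ℝ → ℝ) (x : ℝ × ℝ) : ℝ := pRho s x - sRho s x / sE s x * pE s x

/-- The convexity conditions `∂_ρ(ρ² s_ρ) < 0`, `s_{ee} < 0`, `det Σ > 0` on the domain. -/
def Convexity (s : ℝ × ℝ → ℝ) : Prop :=
  ∀ x ∈ dom, dRho2sRho s x < 0 ∧ sEE s x < 0 ∧ 0 < detSigma s x

/-! ### Directional derivative API -/

section HasPDsec
variable {EE : Type*} [NormedAddCommGroup EE] [NormedSpace ℝ EE]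

def HasPD (f : EE → ℝ) (x v : EE) (d : ℝ) : Prop :=
  ∃ L : EE →L[ℝ] ℝ, HasFDerivAt f L x ∧ L v = d

theorem DifferentiableAt.hasPD {f : EE → ℝ} {x : EE} (h : DifferentiableAt ℝ f x) (v : EE) :
    HasPD f x v (fderiv ℝ f x v) := ⟨fderiv ℝ f x, h.hasFDerivAt, rfl⟩

theorem HasPD.diffAt {f : EE → ℝ} {x v : EE} {d : ℝ} (h : HasPD f x v d) :
    DifferentiableAt ℝ f x := h.choose_spec.1.differentiableAt

theorem HasPD.fderiv_applied {f : EE → ℝ} {x v : EE} {d : ℝ} (h : HasPD f x v d) :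
    fderiv ℝ f x v = d := by
  obtain ⟨L, hL, hv⟩ := h; rw [hL.fderiv]; exact hv

theorem HasPD.congr_d {f : EE → ℝ} {x v : EE} {d d' : ℝ} (h : HasPD f x v d) (hd : d = d') :
    HasPD f x v d' := hd ▸ h

theorem HasPD.fun_congr {f g : EE → ℝ} {x v : EE} {d : ℝ} (h : HasPD f x v d)
    (hfg : ∀ y, f y = g y) : HasPD g x v d := (funext hfg : f = g) ▸ h

theorem hasPD_const (c : ℝ) (x v : EE) : HasPD (fun _ => c) x v 0 :=
  ⟨0, hasFDerivAt_const c x, rfl⟩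

theorem HasPD.add {f g : EE → ℝ} {x v : EE} {df dg : ℝ} (hf : HasPD f x v df)
    (hg : HasPD g x v dg) : HasPD (fun y => f y + g y) x v (df + dg) := by
  obtain ⟨L, hL, hLv⟩ := hf; obtain ⟨M, hM, hMv⟩ := hg
  exact ⟨L + M, hL.add hM, by simp [hLv, hMv]⟩

theorem HasPD.neg {f : EE → ℝ} {x v : EE} {df : ℝ} (hf : HasPD f x v df) :
    HasPD (fun y => -f y) x v (-df) := by
  obtain ⟨L, hL, hLv⟩ := hf
  exact ⟨-L, hL.neg, by simp [hLv]⟩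

theorem HasPD.sub {f g : EE → ℝ} {x v : EE} {df dg : ℝ} (hf : HasPD f x v df)
    (hg : HasPD g x v dg) : HasPD (fun y => f y - g y) x v (df - dg) := by
  have := hf.add hg.neg
  exact (this.fun_congr (fun y => by ring)).congr_d (by ring)

theorem HasPD.mul {f g : EE → ℝ} {x v : EE} {df dg : ℝ} (hf : HasPD f x v df)
    (hg : HasPD g x v dg) : HasPD (fun y => f y * g y) x v (df * g x + f x * dg) := by
  obtain ⟨L, hL, hLv⟩ := hf; obtain ⟨M, hM, hMv⟩ := hg
  exact ⟨f x • M + L.smulRight (g x), hL.mul' hM, by simp [hLv, hMv]; ring⟩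

theorem HasPD.const_mul {f : EE → ℝ} {x v : EE} {df : ℝ} (c : ℝ) (hf : HasPD f x v df) :
    HasPD (fun y => c * f y) x v (c * df) := by
  have := (hasPD_const c x v).mul hf
  exact this.congr_d (by ring)

theorem HasPD.inv {f : EE → ℝ} {x v : EE} {df : ℝ} (hf : HasPD f x v df) (h0 : f x ≠ 0) :
    HasPD (fun y => (f y)⁻¹) x v (-df / f x ^ 2) := by
  obtain ⟨L, hL, hLv⟩ := hf
  have h1 : HasFDerivAt (fun y => (f y)⁻¹) (-(f x ^ 2)⁻¹ • L) x := by
    have h2 : HasFDerivAt Inv.inv (-(f x ^ 2)⁻¹ • (1 : ℝ →L[ℝ] ℝ)) (f x) := by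
      have := (hasDerivAt_inv h0).hasFDerivAt
      have e : (-(f x ^ 2)⁻¹ • (1 : ℝ →L[ℝ] ℝ)) = ContinuousLinearMap.toSpanSingleton ℝ (-(f x ^ 2)⁻¹) := by
        ext; simp
      rw [e]; exact this
    have := h2.comp x hL
    have e : (-(f x ^ 2)⁻¹ • L) = (-(f x ^ 2)⁻¹ • (1 : ℝ →L[ℝ] ℝ)).comp L := by ext; simp
    rw [e]; exact this
  refine ⟨-(f x ^ 2)⁻¹ • L, h1, ?_⟩
  simp [hLv]; field_simp

theorem HasPD.div {f g : EE → ℝ} {x v : EE} {df dg : ℝ} (hf : HasPD f x v df)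
    (hg : HasPD g x v dg) (h0 : g x ≠ 0) :
    HasPD (fun y => f y / g y) x v ((df * g x - f x * dg) / g x ^ 2) := by
  have := hf.mul (hg.inv h0)
  refine (this.fun_congr (fun y => (div_eq_mul_inv (f y) (g y)).symm)).congr_d ?_
  field_simp; ring

theorem HasPD.finsum {ι : Type*} (t : Finset ι) {f : ι → EE → ℝ} {x v : EE} {d : ι → ℝ}
    (h : ∀ i ∈ t, HasPD (f i) x v (d i)) :
    HasPD (fun y => ∑ i ∈ t, f i y) x v (∑ i ∈ t, d i) := by
  classical
  induction t using Finset.induction with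
  | empty => simpa using hasPD_const 0 x v
  | @insert a t hni ih =>
    have h1 := (h a (Finset.mem_insert_self a t)).add
      (ih fun i hi => h i (Finset.mem_insert_of_mem hi))
    rw [Finset.sum_insert hni]
    exact h1.fun_congr fun y => by rw [Finset.sum_insert hni]

theorem HasPD.comp1 {F : ℝ → ℝ} {f : EE → ℝ} {x v : EE} {d : ℝ}
    (hF : DifferentiableAt ℝ F (f x)) (hf : HasPD f x v d) :
    HasPD (fun y => F (f y)) x v (deriv F (f x) * d) := by
  obtain ⟨L, hL, hLv⟩ := hf
  refine ⟨(fderiv ℝ F (f x)).comp L, ?_, ?_⟩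
  · exact (hF.hasFDerivAt.comp x hL : HasFDerivAt (F ∘ f) _ x)
  · show fderiv ℝ F (f x) (L v) = _
    have h1 : L v = (L v) • (1 : ℝ) := by simp
    rw [h1, map_smul, fderiv_apply_one_eq_deriv, hLv, smul_eq_mul]; ring

theorem HasPD.comp2 {g : ℝ × ℝ → ℝ} {a b : EE → ℝ} {x v : EE} {da db : ℝ}
    (hg : DifferentiableAt ℝ g (a x, b x)) (ha : HasPD a x v da) (hb : HasPD b x v db) :
    HasPD (fun y => g (a y, b y)) x v (D1 g (a x, b x) * da + D2 g (a x, b x) * db) := by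
  obtain ⟨L, hL, hLv⟩ := ha; obtain ⟨M, hM, hMv⟩ := hb
  refine ⟨(fderiv ℝ g (a x, b x)).comp (L.prod M), ?_, ?_⟩
  · exact (hg.hasFDerivAt.comp x (HasFDerivAt.prodMk hL hM) : HasFDerivAt (g ∘ fun y => (a y, b y)) _ x)
  · show fderiv ℝ g (a x, b x) (L v, M v) = _
    have h1 : (L v, M v) = (L v) • ((1:ℝ), (0:ℝ)) + (M v) • ((0:ℝ), (1:ℝ)) := by
      simp [Prod.ext_iff]
    rw [h1, map_add, map_smul, map_smul, hLv, hMv]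
    simp only [D1, D2, smul_eq_mul]
    ring

theorem hasPD_fst (x v : ℝ × ℝ) : HasPD (fun y : ℝ × ℝ => y.1) x v v.1 :=
  ⟨ContinuousLinearMap.fst ℝ ℝ ℝ, hasFDerivAt_fst, rfl⟩

end HasPDsec

theorem isOpen_dom : IsOpen dom := by
  have h1 : dom = (Set.Ioi (0:ℝ)) ×ˢ (Set.Ioi (0:ℝ)) := by
    ext x; simp [dom, Set.mem_prod]
  rw [h1]; exact isOpen_Ioi.prod isOpen_Ioi

section SLemmas
variable {s : ℝ × ℝ → ℝ} {x : ℝ × ℝ}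

theorem s_diffAt (hs : ContDiffOn ℝ 2 s dom) (hx : x ∈ dom) : DifferentiableAt ℝ s x :=
  (hs.contDiffAt (isOpen_dom.mem_nhds hx)).differentiableAt two_ne_zero

theorem sD_diffAt (hs : ContDiffOn ℝ 2 s dom) (hx : x ∈ dom) (w : ℝ × ℝ) :
    DifferentiableAt ℝ (fun y => fderiv ℝ s y w) x := by
  have h1 : ContDiffOn ℝ 1 (fderiv ℝ s) dom := hs.fderiv_of_isOpen isOpen_dom (le_refl 2)
  have h2 : DifferentiableAt ℝ (fderiv ℝ s) x :=
    (h1.differentiableOn one_ne_zero).differentiableAt (isOpen_dom.mem_nhds hx)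
  exact ((ContinuousLinearMap.apply ℝ ℝ w).differentiableAt).comp x h2

theorem sRho_diffAt (hs : ContDiffOn ℝ 2 s dom) (hx : x ∈ dom) :
    DifferentiableAt ℝ (sRho s) x := sD_diffAt hs hx (1, 0)

theorem sE_diffAt (hs : ContDiffOn ℝ 2 s dom) (hx : x ∈ dom) :
    DifferentiableAt ℝ (sE s) x := sD_diffAt hs hx (0, 1)

theorem fderiv_fderiv_apply (hs : ContDiffOn ℝ 2 s dom) (hx : x ∈ dom) (w z : ℝ × ℝ) :
    fderiv ℝ (fun y => fderiv ℝ s y w) x z = fderiv ℝ (fderiv ℝ s) x z w := by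
  have h1 : ContDiffOn ℝ 1 (fderiv ℝ s) dom := hs.fderiv_of_isOpen isOpen_dom (le_refl 2)
  have h2 : DifferentiableAt ℝ (fderiv ℝ s) x :=
    (h1.differentiableOn one_ne_zero).differentiableAt (isOpen_dom.mem_nhds hx)
  have h3 := ((ContinuousLinearMap.apply ℝ ℝ w).hasFDerivAt.comp x h2.hasFDerivAt)
  have h4 : (fun y => fderiv ℝ s y w) = (ContinuousLinearMap.apply ℝ ℝ w) ∘ (fderiv ℝ s) := rfl
  rw [h4, h3.fderiv]; rfl

theorem schwarz (hs : ContDiffOn ℝ 2 s dom) (hx : x ∈ dom) :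
    D2 (D1 s) x = sRhoE s x := by
  have hsymm := (hs.contDiffAt (isOpen_dom.mem_nhds hx)).isSymmSndFDerivAt (by simp [minSmoothness_of_isRCLikeNormedField])
  show fderiv ℝ (fun y => fderiv ℝ s y (1, 0)) x (0, 1)
    = fderiv ℝ (fun y => fderiv ℝ s y (0, 1)) x (1, 0)
  rw [fderiv_fderiv_apply hs hx, fderiv_fderiv_apply hs hx]
  exact hsymm _ _

theorem dRho2sRho_eq (hs : ContDiffOn ℝ 2 s dom) (hx : x ∈ dom) :
    dRho2sRho s x = 2 * x.1 * sRho s x + x.1 ^ 2 * D1 (D1 s) x := by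
  have hdiff : DifferentiableAt ℝ (sRho s) x := sRho_diffAt hs hx
  have hline : HasFDerivAt (fun t : ℝ => ((t, x.2) : ℝ × ℝ))
      (ContinuousLinearMap.inl ℝ ℝ ℝ) x.1 := by
    have h0 := (ContinuousLinearMap.inl ℝ ℝ ℝ).hasFDerivAt (x := x.1)
    have := h0.add_const ((0:ℝ), x.2)
    simpa using this
  have hxe : ((x.1, x.2) : ℝ × ℝ) = x := rfl
  have hcomp : HasFDerivAt (fun t : ℝ => sRho s (t, x.2))
      ((fderiv ℝ (sRho s) x).comp (ContinuousLinearMap.inl ℝ ℝ ℝ)) x.1 := by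
    have := hdiff.hasFDerivAt
    exact (HasFDerivAt.comp x.1 (hxe ▸ this) hline :
      HasFDerivAt ((sRho s) ∘ fun t : ℝ => ((t, x.2) : ℝ × ℝ)) _ x.1)
  have hd : HasDerivAt (fun t : ℝ => sRho s (t, x.2)) (D1 (D1 s) x) x.1 := by
    have := hcomp.hasDerivAt
    simpa [D1, sRho] using this
  have h2 : HasDerivAt (fun t : ℝ => t ^ 2 * sRho s (t, x.2))
      (2 * x.1 * sRho s x + x.1 ^ 2 * D1 (D1 s) x) x.1 := by
    have := (hasDerivAt_pow 2 x.1).mul hd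
    have hxe2 : sRho s (x.1, x.2) = sRho s x := rfl
    exact this.congr_deriv (by rw [hxe2]; push_cast; ring)
  rw [dRho2sRho]; exact h2.deriv

end SLemmas

section CPsec
variable {s : ℝ × ℝ → ℝ} {x : ℝ × ℝ}

theorem press_hasPD (hs : ContDiffOn ℝ 2 s dom) (hx : x ∈ dom) (hse : sE s x ≠ 0)
    (v : ℝ × ℝ) : HasPD (press s) x v
      ((((-(v.1 * x.1 + x.1 * v.1)) * sRho s x + (-x.1 ^ 2) * fderiv ℝ (sRho s) x v) * sE s x
        - (-x.1 ^ 2 * sRho s x) * fderiv ℝ (sE s) x v) / (sE s x) ^ 2) := by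
  have h1 : HasPD (fun y : ℝ × ℝ => y.1) x v v.1 := hasPD_fst x v
  have hsq : HasPD (fun y : ℝ × ℝ => -y.1 ^ 2) x v (-(v.1 * x.1 + x.1 * v.1)) :=
    ((h1.mul h1).neg).fun_congr (fun y => by ring)
  have hnum : HasPD (fun y : ℝ × ℝ => -y.1 ^ 2 * sRho s y) x v
      ((-(v.1 * x.1 + x.1 * v.1)) * sRho s x + (-x.1 ^ 2) * fderiv ℝ (sRho s) x v) :=
    hsq.mul ((sRho_diffAt hs hx).hasPD v)
  have hdiv := hnum.div ((sE_diffAt hs hx).hasPD v) hse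
  exact hdiv.fun_congr (fun y => rfl)

theorem pRho_eq (hs : ContDiffOn ℝ 2 s dom) (hx : x ∈ dom) (hse : sE s x ≠ 0) :
    pRho s x = ((-(2 * x.1) * sRho s x + (-x.1 ^ 2) * D1 (D1 s) x) * sE s x
        - (-x.1 ^ 2 * sRho s x) * sRhoE s x) / (sE s x) ^ 2 := by
  have h := (press_hasPD hs hx hse (1, 0)).fderiv_applied
  have e1 : fderiv ℝ (sRho s) x ((1 : ℝ), (0 : ℝ)) = D1 (D1 s) x := rfl
  have e2 : fderiv ℝ (sE s) x ((1 : ℝ), (0 : ℝ)) = sRhoE s x := rfl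
  show fderiv ℝ (press s) x (1, 0) = _
  rw [h, e1, e2]
  norm_num
  try ring

theorem pE_eq (hs : ContDiffOn ℝ 2 s dom) (hx : x ∈ dom) (hse : sE s x ≠ 0) :
    pE s x = ((-x.1 ^ 2 * sRhoE s x) * sE s x
        - (-x.1 ^ 2 * sRho s x) * sEE s x) / (sE s x) ^ 2 := by
  have h := (press_hasPD hs hx hse (0, 1)).fderiv_applied
  have e1 : fderiv ℝ (sRho s) x ((0 : ℝ), (1 : ℝ)) = D2 (D1 s) x := rfl
  have e2 : fderiv ℝ (sE s) x ((0 : ℝ), (1 : ℝ)) = sEE s x := rfl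
  show fderiv ℝ (press s) x (0, 1) = _
  rw [h, e1, e2, schwarz hs hx]
  norm_num
  try ring

theorem temp_hasPD (hs : ContDiffOn ℝ 2 s dom) (hx : x ∈ dom) (hse : sE s x ≠ 0)
    (v : ℝ × ℝ) : HasPD (temp s) x v (-(fderiv ℝ (sE s) x v) / (sE s x) ^ 2) :=
  (((sE_diffAt hs hx).hasPD v).inv hse).fun_congr (fun y => rfl)

theorem tRho_eq (hs : ContDiffOn ℝ 2 s dom) (hx : x ∈ dom) (hse : sE s x ≠ 0) :
    tRho s x = -(sRhoE s x) / (sE s x) ^ 2 := by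
  have h := (temp_hasPD hs hx hse (1, 0)).fderiv_applied
  have e2 : fderiv ℝ (sE s) x ((1 : ℝ), (0 : ℝ)) = sRhoE s x := rfl
  show fderiv ℝ (temp s) x (1, 0) = _
  rw [h, e2]

theorem tE_eq (hs : ContDiffOn ℝ 2 s dom) (hx : x ∈ dom) (hse : sE s x ≠ 0) :
    tE s x = -(sEE s x) / (sE s x) ^ 2 := by
  have h := (temp_hasPD hs hx hse (0, 1)).fderiv_applied
  have e2 : fderiv ℝ (sE s) x ((0 : ℝ), (1 : ℝ)) = sEE s x := rfl
  show fderiv ℝ (temp s) x (0, 1) = _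
  rw [h, e2]

theorem cP_formula (hs : ContDiffOn ℝ 2 s dom) (hx : x ∈ dom) (hse : sE s x ≠ 0)
    (hdet : detSigma s x ≠ 0) :
    cP s x = -(dRho2sRho s x * (sE s x) ^ 2
        - 2 * x.1 ^ 2 * sRho s x * sE s x * sRhoE s x
        + x.1 ^ 2 * (sRho s x) ^ 2 * sEE s x) / detSigma s x := by
  have h1 := pRho_eq hs hx hse
  have h2 := pE_eq hs hx hse
  have h3 := tRho_eq hs hx hse
  have h4 := tE_eq hs hx hse
  have hσ := dRho2sRho_eq hs hx
  have hden : pRho s x * tE s x - pE s x * tRho s x = detSigma s x / (sE s x) ^ 3 := by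
    rw [h1, h2, h3, h4, detSigma, hσ]
    field_simp
    ring
  have hnum : pRho s x * sE s x - pE s x * sRho s x
      = -(dRho2sRho s x * (sE s x) ^ 2 - 2 * x.1 ^ 2 * sRho s x * sE s x * sRhoE s x
          + x.1 ^ 2 * (sRho s x) ^ 2 * sEE s x) / (sE s x) ^ 2 := by
    rw [h1, h2, hσ]
    field_simp
    ring
  rw [cP, hnum, hden]
  field_simp
end CPsec


theorem Bq_neg {r sρ se s11 s12 s22 : ℝ} (hr : 0 < r) (hse : 0 < se)
    (hσ : 2 * r * sρ + r ^ 2 * s11 < 0)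
    (hdet : 0 < (2 * r * sρ + r ^ 2 * s11) * s22 - r ^ 2 * s12 ^ 2) :
    (2 * r * sρ + r ^ 2 * s11) * se ^ 2 - 2 * r ^ 2 * sρ * se * s12
      + r ^ 2 * sρ ^ 2 * s22 < 0 := by
  by_cases hsρ : sρ = 0
  · rw [hsρ] at hσ ⊢
    have h2 : 0 < se ^ 2 := by positivity
    nlinarith [mul_pos (neg_pos.mpr hσ) h2]
  · have h5 : 0 < sρ ^ 2 := by positivity
    have key : (2 * r * sρ + r ^ 2 * s11) * ((2 * r * sρ + r ^ 2 * s11) * se ^ 2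
          - 2 * r ^ 2 * sρ * se * s12 + r ^ 2 * sρ ^ 2 * s22)
        = ((2 * r * sρ + r ^ 2 * s11) * se - r ^ 2 * s12 * sρ) ^ 2
          + r ^ 2 * sρ ^ 2 * ((2 * r * sρ + r ^ 2 * s11) * s22 - r ^ 2 * s12 ^ 2) := by
      ring
    nlinarith [sq_nonneg ((2 * r * sρ + r ^ 2 * s11) * se - r ^ 2 * s12 * sρ),
      mul_pos (mul_pos (pow_pos hr 2) h5) hdet]

theorem quad_nonpos {r sρ se s11 s12 s22 F1 F2 : ℝ}
    (hr : 0 < r) (hse : 0 < se) (hF1 : 0 < F1)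
    (hσ : 2 * r * sρ + r ^ 2 * s11 < 0)
    (hdet : 0 < (2 * r * sρ + r ^ 2 * s11) * s22 - r ^ 2 * s12 ^ 2)
    (hfd : 0 < F1 * ((2 * r * sρ + r ^ 2 * s11) * s22 - r ^ 2 * s12 ^ 2)
      + F2 * ((2 * r * sρ + r ^ 2 * s11) * se ^ 2 - 2 * r ^ 2 * sρ * se * s12
        + r ^ 2 * sρ ^ 2 * s22))
    (R E : ℝ) :
    (F1 * (2 * sρ + r * s11) + r * F2 * sρ ^ 2) * R ^ 2
      + 2 * (r * (F1 * s12 + F2 * sρ * se)) * (R * E)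
      + (r * (F1 * s22 + F2 * se ^ 2)) * E ^ 2 ≤ 0 := by
  have hBq := Bq_neg hr hse hσ hdet
  set A := F1 * (2 * r * sρ + r ^ 2 * s11) + r ^ 2 * F2 * sρ ^ 2 with hA
  set B := r ^ 2 * (F1 * s12 + F2 * sρ * se) with hB
  set C := r ^ 2 * (F1 * s22 + F2 * se ^ 2) with hC
  have hdet2 : A * C - B ^ 2 = r ^ 2 * F1 * (F1 * ((2 * r * sρ + r ^ 2 * s11) * s22
      - r ^ 2 * s12 ^ 2) + F2 * ((2 * r * sρ + r ^ 2 * s11) * se ^ 2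
      - 2 * r ^ 2 * sρ * se * s12 + r ^ 2 * sρ ^ 2 * s22)) := by
    rw [hA, hB, hC]; ring
  have hdet2pos : 0 < A * C - B ^ 2 := by
    rw [hdet2]
    have := mul_pos (mul_pos (pow_pos hr 2) hF1) hfd
    linarith
  have hABq : A * (F1 * ((2 * r * sρ + r ^ 2 * s11) * se ^ 2
      - 2 * r ^ 2 * sρ * se * s12 + r ^ 2 * sρ ^ 2 * s22))
      = (A * se - B * sρ) ^ 2 + (A * C - B ^ 2) * sρ ^ 2 := by
    rw [hA, hB, hC]; ring
  have hAneg : A < 0 := by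
    rcases lt_trichotomy A 0 with h | h | h
    · exact h
    · exfalso; rw [h] at hdet2pos; nlinarith [sq_nonneg B]
    · exfalso
      have h1 : A * (F1 * ((2 * r * sρ + r ^ 2 * s11) * se ^ 2
          - 2 * r ^ 2 * sρ * se * s12 + r ^ 2 * sρ ^ 2 * s22)) < 0 :=
        mul_neg_of_pos_of_neg h (mul_neg_of_pos_of_neg hF1 hBq)
      rw [hABq] at h1
      have hR : 0 ≤ (A * se - B * sρ) ^ 2 + (A * C - B ^ 2) * sρ ^ 2 :=
        add_nonneg (sq_nonneg _) (mul_nonneg hdet2pos.le (sq_nonneg sρ))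
      linarith
  have hquad : A * (A * R ^ 2 + 2 * B * (R * E) + C * E ^ 2)
      = (A * R + B * E) ^ 2 + (A * C - B ^ 2) * E ^ 2 := by ring
  have h2 : A * R ^ 2 + 2 * B * (R * E) + C * E ^ 2 ≤ 0 := by
    by_contra hq
    push_neg at hq
    have := mul_neg_of_neg_of_pos hAneg hq
    rw [hquad] at this
    have hR : 0 ≤ (A * R + B * E) ^ 2 + (A * C - B ^ 2) * E ^ 2 :=
      add_nonneg (sq_nonneg _) (mul_nonneg hdet2pos.le (sq_nonneg E))
    linarith
  have h3 : r * ((F1 * (2 * sρ + r * s11) + r * F2 * sρ ^ 2) * R ^ 2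
      + 2 * (r * (F1 * s12 + F2 * sρ * se)) * (R * E)
      + (r * (F1 * s22 + F2 * se ^ 2)) * E ^ 2)
      = A * R ^ 2 + 2 * B * (R * E) + C * E ^ 2 := by rw [hA, hB, hC]; ring
  by_contra hq
  push_neg at hq
  have := mul_pos hr hq
  rw [h3] at this
  linarith


/-- velocity-gradient value -/
def DUval {n : ℕ} (ρ : ℝ × (Fin n → ℝ) → ℝ) (m u : ℝ × (Fin n → ℝ) → Fin n → ℝ)
    (j : Fin n) (r v : ℝ × (Fin n → ℝ)) : ℝ :=
  (fderiv ℝ (fun y => m y j) r v - u r j * fderiv ℝ ρ r v) / ρ r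

def DKval {n : ℕ} (ρ : ℝ × (Fin n → ℝ) → ℝ) (m u : ℝ × (Fin n → ℝ) → Fin n → ℝ)
    (r v : ℝ × (Fin n → ℝ)) : ℝ := ∑ j, u r j * DUval ρ m u j r v

def Deval {n : ℕ} (ρ E : ℝ × (Fin n → ℝ) → ℝ) (m u : ℝ × (Fin n → ℝ) → Fin n → ℝ)
    (r v : ℝ × (Fin n → ℝ)) : ℝ :=
  (fderiv ℝ E r v - E r / ρ r * fderiv ℝ ρ r v) / ρ r - DKval ρ m u r v

/-- Time derivative `∂_t f` of a scalar field on space-time `ℝ × ℝ^n` (time first). -/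
def Dt {n : ℕ} (f : ℝ × (Fin n → ℝ) → ℝ) (q : ℝ × (Fin n → ℝ)) : ℝ :=
  fderiv ℝ f q (1, 0)

/-- Spatial partial derivative `∂_{x_i} f` of a scalar field on space-time `ℝ × ℝ^n`. -/
def Dx {n : ℕ} (i : Fin n) (f : ℝ × (Fin n → ℝ) → ℝ) (q : ℝ × (Fin n → ℝ)) : ℝ :=
  fderiv ℝ f q (0, Pi.single i 1)

set_option maxHeartbeats 4000000 in
/-- **Entropy inequality for `a = d` (sufficiency):** if the viscous coefficients satisfy
`a(ρ,e) = d(ρ,e)` for all states, then every generalized entropy `ρ f(s)` (with `f' > 0`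
and `f' c_p⁻¹ - f'' > 0` at all states) satisfies the pointwise entropy inequality
`∂_t(ρ f(s)) + div(u ρ f(s) - d ρ ∇f(s) - a f(s) ∇ρ) ≥ 0`. -/
theorem entropy_inequality_of_a_eq_d
    (n : ℕ) (hn : 0 < n)
    (s : ℝ × ℝ → ℝ) (hs : ContDiffOn ℝ 2 s dom)
    (hsepos : ∀ x ∈ dom, 0 < sE s x) (hconv : Convexity s)
    -- the fields of the solution
    (ρ E : ℝ × (Fin n → ℝ) → ℝ)
    (m fvec lvec : ℝ × (Fin n → ℝ) → Fin n → ℝ)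
    (G : ℝ × (Fin n → ℝ) → Fin n → Fin n → ℝ)
    (hρ : ContDiff ℝ 2 ρ) (hE : ContDiff ℝ 2 E) (hm : ContDiff ℝ 2 m)
    (hfvec : ContDiff ℝ 2 fvec) (hlvec : ContDiff ℝ 2 lvec) (hG : ContDiff ℝ 2 G)
    (hρpos : ∀ q, 0 < ρ q)
    -- derived fields: velocity, internal energy, entropy, pressure
    (u : ℝ × (Fin n → ℝ) → Fin n → ℝ) (hu : ∀ q i, u q i = m q i / ρ q)
    (eI : ℝ × (Fin n → ℝ) → ℝ)
    (heI : ∀ q, eI q = E q / ρ q - (1 / 2) * ∑ i, (u q i) ^ 2)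
    (heIpos : ∀ q, 0 < eI q)
    (S seF sρF pF : ℝ × (Fin n → ℝ) → ℝ)
    (hS : ∀ q, S q = s (ρ q, eI q))
    (hseF : ∀ q, seF q = sE s (ρ q, eI q))
    (hsρF : ∀ q, sρF q = sRho s (ρ q, eI q))
    (hpF : ∀ q, pF q = -(ρ q) ^ 2 * sρF q / seF q)
    -- the viscous fluxes `𝕘 = 𝔾 + f⊗u`, `h = l - ½|u|² f`
    (g : ℝ × (Fin n → ℝ) → Fin n → Fin n → ℝ)
    (hg : ∀ q i j, g q i j = G q i j + fvec q i * u q j)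
    (h : ℝ × (Fin n → ℝ) → Fin n → ℝ)
    (hh : ∀ q i, h q i = lvec q i - (1 / 2) * (∑ k, (u q k) ^ 2) * fvec q i)
    -- structural assumptions
    (hGpos : ∀ q : ℝ × (Fin n → ℝ), 0 ≤ q.1 →
      0 ≤ ∑ i, ∑ j, G q i j * Dx i (fun r => u r j) q)
    (acoef dcoef : ℝ × ℝ → ℝ)
    (ha : ∀ y : ℝ × ℝ, 0 ≤ acoef y) (hdc : ∀ y : ℝ × ℝ, 0 ≤ dcoef y)
    (hfdef : ∀ q i, fvec q i = acoef (ρ q, eI q) * Dx i ρ q)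
    (hldef : ∀ q i, lvec q i = (seF q)⁻¹ * (eI q * seF q - ρ q * sρF q) * fvec q i
      + dcoef (ρ q, eI q) * ρ q * (seF q)⁻¹ * Dx i S q)
    -- the key assumption `a = d`
    (had : ∀ y : ℝ × ℝ, acoef y = dcoef y)
    -- the regularized Euler system
    (mass : ∀ q : ℝ × (Fin n → ℝ), 0 ≤ q.1 →
      Dt ρ q + (∑ i, Dx i (fun r => m r i) q) - (∑ i, Dx i (fun r => fvec r i) q) = 0)
    (momentum : ∀ q : ℝ × (Fin n → ℝ), 0 ≤ q.1 → ∀ j,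
      Dt (fun r => m r j) q + (∑ i, Dx i (fun r => u r i * m r j) q) + Dx j pF q
        - (∑ i, Dx i (fun r => g r i j) q) = 0)
    (energy : ∀ q : ℝ × (Fin n → ℝ), 0 ≤ q.1 →
      Dt E q + (∑ i, Dx i (fun r => u r i * (E r + pF r)) q)
        - (∑ i, Dx i (fun r => h r i + ∑ j, g r i j * u r j) q) = 0)
    -- a generalized entropy `ρ f(s)`
    (F : ℝ → ℝ) (hF : ContDiff ℝ 2 F)
    (hF' : ∀ z ∈ dom, 0 < deriv F (s z))
    (hF'' : ∀ z ∈ dom, 0 < deriv F (s z) * (cP s z)⁻¹ - deriv (deriv F) (s z)) :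
    -- the generalized entropy inequality
    ∀ q : ℝ × (Fin n → ℝ), 0 ≤ q.1 →
      0 ≤ Dt (fun r => ρ r * F (S r)) q
        + ∑ i, Dx i (fun r => u r i * (ρ r * F (S r))
            - dcoef (ρ r, eI r) * ρ r * Dx i (fun r' => F (S r')) r
            - acoef (ρ r, eI r) * F (S r) * Dx i ρ r) q := by
  intro q hq
  classical
  have hψ : ∀ r : ℝ × (Fin n → ℝ), (ρ r, eI r) ∈ dom := fun r => ⟨hρpos r, heIpos r⟩
  have hψq : ((ρ q, eI q) : ℝ × ℝ) ∈ dom := hψ q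
  have hρd : ∀ r : ℝ × (Fin n → ℝ), DifferentiableAt ℝ ρ r :=
    fun r => (hρ.differentiable two_ne_zero).differentiableAt
  have hEd : ∀ r : ℝ × (Fin n → ℝ), DifferentiableAt ℝ E r :=
    fun r => (hE.differentiable two_ne_zero).differentiableAt
  have hmd : ∀ (j : Fin n) r, DifferentiableAt ℝ (fun y => m y j) r :=
    fun j r => (differentiableAt_pi.mp ((hm.differentiable two_ne_zero).differentiableAt)) j
  have hfd' : ∀ (j : Fin n) r, DifferentiableAt ℝ (fun y => fvec y j) r :=
    fun j r => (differentiableAt_pi.mp ((hfvec.differentiable two_ne_zero).differentiableAt)) j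
  have hld : ∀ (j : Fin n) r, DifferentiableAt ℝ (fun y => lvec y j) r :=
    fun j r => (differentiableAt_pi.mp ((hlvec.differentiable two_ne_zero).differentiableAt)) j
  have hGd : ∀ (i j : Fin n) r, DifferentiableAt ℝ (fun y => G y i j) r := fun i j r =>
    (differentiableAt_pi.mp ((differentiableAt_pi.mp
      ((hG.differentiable two_ne_zero).differentiableAt)) i)) j
  have hrne : ∀ r : ℝ × (Fin n → ℝ), ρ r ≠ 0 := fun r => ne_of_gt (hρpos r)
  have hsene : ∀ r : ℝ × (Fin n → ℝ), sE s (ρ r, eI r) ≠ 0 :=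
    fun r => ne_of_gt (hsepos _ (hψ r))
  have hse0 : (0:ℝ) < sE s (ρ q, eI q) := hsepos _ hψq
  have hFd : ∀ y : ℝ, DifferentiableAt ℝ F y :=
    fun y => (hF.differentiable two_ne_zero).differentiableAt
  have hF'd : ∀ y : ℝ, DifferentiableAt ℝ (deriv F) y := by
    have h2 : ContDiff ℝ ((1 : ℕ∞) + 1) F := by convert hF using 2; norm_num
    exact fun y => ((contDiff_succ_iff_deriv.mp h2).2.2.differentiable one_ne_zero).differentiableAt
  -- HasPD family
  have huP : ∀ (j : Fin n) (r : ℝ × (Fin n → ℝ)) (v : ℝ × (Fin n → ℝ)),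
      HasPD (fun y => u y j) r v (DUval ρ m u j r v) := by
    intro j r v
    have h1 := ((hmd j r).hasPD v).div ((hρd r).hasPD v) (hrne r)
    refine (h1.fun_congr fun y => (hu y j).symm).congr_d ?_
    rw [DUval, hu r j]
    field_simp [hrne r]
    try ring
    try exact Or.inl trivial
    try tauto
  have hkP : ∀ (r v : ℝ × (Fin n → ℝ)),
      HasPD (fun y => 1 / 2 * ∑ k, u y k ^ 2) r v (DKval ρ m u r v) := by
    intro r v
    have h1 : ∀ k ∈ Finset.univ, HasPD (fun y => u y k * u y k) r v
        (DUval ρ m u k r v * u r k + u r k * DUval ρ m u k r v) :=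
      fun k _ => (huP k r v).mul (huP k r v)
    have h2 := (HasPD.finsum Finset.univ h1).const_mul (1 / 2)
    refine (h2.fun_congr fun y => ?_).congr_d ?_
    · congr 1
      exact Finset.sum_congr rfl fun k _ => by ring
    · rw [DKval, Finset.mul_sum]
      exact Finset.sum_congr rfl fun k _ => by ring
  have heP : ∀ (r v : ℝ × (Fin n → ℝ)), HasPD eI r v (Deval ρ E m u r v) := by
    intro r v
    have h1 := ((hEd r).hasPD v).div ((hρd r).hasPD v) (hrne r)
    have h2 := h1.sub (hkP r v)
    refine (h2.fun_congr fun y => ?_).congr_d ?_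
    · rw [heI y]
    · rw [Deval]
      field_simp [hrne r]
      try ring
      try exact Or.inl trivial
      try tauto
    try exact Or.inl trivial
    try tauto
  have hsd : ∀ r : ℝ × (Fin n → ℝ), DifferentiableAt ℝ s (ρ r, eI r) :=
    fun r => s_diffAt hs (hψ r)
  have hsρd : ∀ r : ℝ × (Fin n → ℝ), DifferentiableAt ℝ (sRho s) (ρ r, eI r) :=
    fun r => sRho_diffAt hs (hψ r)
  have hsed : ∀ r : ℝ × (Fin n → ℝ), DifferentiableAt ℝ (sE s) (ρ r, eI r) :=
    fun r => sE_diffAt hs (hψ r)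
  have hSP : ∀ (r v : ℝ × (Fin n → ℝ)), HasPD (fun y => s (ρ y, eI y)) r v
      (sRho s (ρ r, eI r) * fderiv ℝ ρ r v + sE s (ρ r, eI r) * Deval ρ E m u r v) :=
    fun r v => HasPD.comp2 (hsd r) ((hρd r).hasPD v) (heP r v)
  have hseFP : ∀ (r v : ℝ × (Fin n → ℝ)), HasPD (fun y => sE s (ρ y, eI y)) r v
      (sRhoE s (ρ r, eI r) * fderiv ℝ ρ r v + sEE s (ρ r, eI r) * Deval ρ E m u r v) :=
    fun r v => HasPD.comp2 (hsed r) ((hρd r).hasPD v) (heP r v)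
  have hsρFP : ∀ (r v : ℝ × (Fin n → ℝ)), HasPD (fun y => sRho s (ρ y, eI y)) r v
      (D1 (D1 s) (ρ r, eI r) * fderiv ℝ ρ r v + sRhoE s (ρ r, eI r) * Deval ρ E m u r v) := by
    intro r v
    have h1 := HasPD.comp2 (hsρd r) ((hρd r).hasPD v) (heP r v)
    refine h1.congr_d ?_
    have h2 : D2 (sRho s) (ρ r, eI r) = sRhoE s (ρ r, eI r) := schwarz hs (hψ r)
    rw [h2]
    rfl
  have hFSP : ∀ (r v : ℝ × (Fin n → ℝ)), HasPD (fun y => F (s (ρ y, eI y))) r v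
      (deriv F (s (ρ r, eI r)) * (sRho s (ρ r, eI r) * fderiv ℝ ρ r v
        + sE s (ρ r, eI r) * Deval ρ E m u r v)) :=
    fun r v => HasPD.comp1 (hFd _) (hSP r v)
  have hF'SP : ∀ (r v : ℝ × (Fin n → ℝ)), HasPD (fun y => deriv F (s (ρ y, eI y))) r v
      (deriv (deriv F) (s (ρ r, eI r)) * (sRho s (ρ r, eI r) * fderiv ℝ ρ r v
        + sE s (ρ r, eI r) * Deval ρ E m u r v)) :=
    fun r v => HasPD.comp1 (hF'd _) (hSP r v)
  have hφP : ∀ (r v : ℝ × (Fin n → ℝ)), HasPD (fun y => (sE s (ρ y, eI y))⁻¹ * (eI y * sE s (ρ y, eI y) - ρ y * sRho s (ρ y, eI y))) r v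
      ((-(sRho s (ρ r, eI r) + ρ r * D1 (D1 s) (ρ r, eI r)) * (sE s (ρ r, eI r))⁻¹ + ρ r * sRho s (ρ r, eI r) * sRhoE s (ρ r, eI r) * ((sE s (ρ r, eI r))⁻¹) ^ 2) * fderiv ℝ ρ r v + (1 - (ρ r * sRhoE s (ρ r, eI r) * sE s (ρ r, eI r) - ρ r * sRho s (ρ r, eI r) * sEE s (ρ r, eI r)) * ((sE s (ρ r, eI r))⁻¹) ^ 2) * Deval ρ E m u r v) := by
    intro r v
    have h1 := (((hseFP r v).inv (hsene r)).mul
      (((heP r v).mul (hseFP r v)).sub (((hρd r).hasPD v).mul (hsρFP r v))))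
    refine h1.congr_d ?_
    field_simp [hsene r]
    try ring
    try exact Or.inl trivial
    try tauto
  have hpFd : ∀ r : ℝ × (Fin n → ℝ), DifferentiableAt ℝ (fun y => -(ρ y) ^ 2 * sRho s (ρ y, eI y) / sE s (ρ y, eI y)) r := by
    intro r
    have h1 : HasPD (fun y : ℝ × (Fin n → ℝ) => -(ρ y) ^ 2) r (0 : ℝ × (Fin n → ℝ))
        (-(fderiv ℝ ρ r 0 * ρ r + ρ r * fderiv ℝ ρ r 0)) :=
      (((hρd r).hasPD 0).mul ((hρd r).hasPD 0)).neg.fun_congr (fun y => by ring)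
    exact ((h1.mul (hsρFP r 0)).div (hseFP r 0) (hsene r)).diffAt
  -- value identities at q
  have hmv : ∀ j : Fin n, m q j = ρ q * u q j := fun j => by
    rw [hu q j]; field_simp [hrne q]; try ring
  have hEval : E q = ρ q * (eI q + 1 / 2 * ∑ i, u q i ^ 2) := by
    have h := heI q
    have h2 : E q / ρ q = eI q + 1 / 2 * ∑ i, u q i ^ 2 := by rw [h]; ring
    rw [← h2]
    field_simp [hrne q]
    try ring
    try exact Or.inl trivial
    try tauto
  have hmDq : ∀ (j : Fin n) (v : ℝ × (Fin n → ℝ)),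
      fderiv ℝ (fun y => m y j) q v = ρ q * DUval ρ m u j q v + u q j * fderiv ℝ ρ q v := by
    intro j v
    rw [DUval]
    field_simp [hrne q]
    try ring
    try exact Or.inl trivial
    try tauto
  have hED : ∀ v : ℝ × (Fin n → ℝ), fderiv ℝ E q v = ρ q * Deval ρ E m u q v
      + ρ q * DKval ρ m u q v + (eI q + 1 / 2 * ∑ k, u q k ^ 2) * fderiv ℝ ρ q v := by
    intro v
    rw [Deval, hEval]
    field_simp [hrne q]
    try ring
    try exact Or.inl trivial
    try tauto
  have hfv : ∀ i : Fin n, fvec q i = dcoef (ρ q, eI q) * fderiv ℝ ρ q (0, Pi.single i 1) := by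
    intro i
    have h := hfdef q i
    rw [had] at h
    exact h
  have hSfun : S = fun r => s (ρ r, eI r) := funext hS
  have hwv : ∀ i : Fin n, lvec q i = (sE s (ρ q, eI q))⁻¹ * (eI q * sE s (ρ q, eI q) - ρ q * sRho s (ρ q, eI q)) * fvec q i
      + dcoef (ρ q, eI q) * ρ q * (sE s (ρ q, eI q))⁻¹ * (sRho s (ρ q, eI q) * fderiv ℝ ρ q (0, Pi.single i 1) + sE s (ρ q, eI q) * Deval ρ E m u q (0, Pi.single i 1)) := by
    intro i
    have h := hldef q i
    simp only [hseF, hsρF, hSfun, Dx] at h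
    rw [(hSP q (0, Pi.single i 1)).fderiv_applied] at h
    exact h
  have hpFfun : pF = fun y => -(ρ y) ^ 2 * sRho s (ρ y, eI y) / sE s (ρ y, eI y) := by
    funext r
    rw [hpF r, hsρF r, hseF r]
  have hgfun : ∀ i j : Fin n, (fun r => g r i j) = (fun r => G r i j + fvec r i * u r j) :=
    fun i j => funext fun r => hg r i j
  have hhgfun : ∀ i : Fin n, (fun r => h r i + ∑ j, g r i j * u r j)
      = (fun r => lvec r i + 1 / 2 * (∑ k, u r k ^ 2) * fvec r i + ∑ j, G r i j * u r j) := by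
    intro i
    funext r
    have h1 : ∑ j, g r i j * u r j = (∑ j, G r i j * u r j) + fvec r i * ∑ j, u r j ^ 2 := by
      rw [Finset.mul_sum, ← Finset.sum_add_distrib]
      exact Finset.sum_congr rfl fun j _ => by rw [hg r i j]; ring
    rw [hh r i, h1]
    ring

  -- mass equation in canonical form
  have massEq : fderiv ℝ ρ q (1, 0) + (ρ q * (∑ i, DUval ρ m u i q (0, Pi.single i 1)) + (∑ i, u q i * fderiv ℝ ρ q (0, Pi.single i 1))) - (∑ i, fderiv ℝ (fun y => fvec y i) q (0, Pi.single i 1)) = 0 := by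
    have h0 := mass q hq
    simp only [Dt, Dx] at h0
    have h1 : (∑ i, fderiv ℝ (fun r => m r i) q (0, Pi.single i 1))
        = ρ q * (∑ i, DUval ρ m u i q (0, Pi.single i 1)) + (∑ i, u q i * fderiv ℝ ρ q (0, Pi.single i 1)) := by
      rw [Finset.mul_sum, ← Finset.sum_add_distrib]
      exact Finset.sum_congr rfl fun i _ => hmDq i _
    rw [h1] at h0
    linarith
  -- momentum combination
  have hperM : ∀ (j i : Fin n), fderiv ℝ (fun r => u r i * m r j) q (0, Pi.single i 1)
      = (ρ q * DUval ρ m u i q (0, Pi.single i 1)) * u q j + ρ q * (u q i * DUval ρ m u j q (0, Pi.single i 1)) + (u q i * fderiv ℝ ρ q (0, Pi.single i 1)) * u q j := by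
    intro j i
    have h1 := ((huP i q (0, Pi.single i 1)).mul ((hmd j q).hasPD (0, Pi.single i 1))).fderiv_applied
    refine h1.trans ?_
    beta_reduce
    rw [hmDq j _, hmv j]
    ring
  have hsplitM : ∀ j : Fin n, (∑ i, fderiv ℝ (fun r => u r i * m r j) q (0, Pi.single i 1))
      = (ρ q * (∑ i, DUval ρ m u i q (0, Pi.single i 1))) * u q j + ρ q * (∑ i, u q i * DUval ρ m u j q (0, Pi.single i 1)) + (∑ i, u q i * fderiv ℝ ρ q (0, Pi.single i 1)) * u q j := by
    intro j
    rw [Finset.mul_sum, Finset.sum_mul, Finset.sum_mul, Finset.mul_sum,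
      ← Finset.sum_add_distrib, ← Finset.sum_add_distrib]
    refine Finset.sum_congr rfl fun i _ => ?_
    rw [hperM j i]
  have hswapU : ∑ j, u q j * (∑ i, u q i * DUval ρ m u j q (0, Pi.single i 1)) = (∑ i, u q i * DKval ρ m u q (0, Pi.single i 1)) := by
    simp only [DKval, Finset.mul_sum]
    rw [Finset.sum_comm]
    exact Finset.sum_congr rfl fun i _ => Finset.sum_congr rfl fun j _ => by ring
  have hswapRK : ∑ j, u q j * (dcoef (ρ q, eI q) * (∑ i, fderiv ℝ ρ q (0, Pi.single i 1) * DUval ρ m u j q (0, Pi.single i 1))) = dcoef (ρ q, eI q) * (∑ i, fderiv ℝ ρ q (0, Pi.single i 1) * DKval ρ m u q (0, Pi.single i 1)) := by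
    rw [Finset.mul_sum]
    simp only [DKval, Finset.mul_sum]
    rw [Finset.sum_comm]
    exact Finset.sum_congr rfl fun i _ => Finset.sum_congr rfl fun j _ => by ring
  have hswapDG : ∑ j, u q j * (∑ i, fderiv ℝ (fun y => G y i j) q (0, Pi.single i 1)) = (∑ i, ∑ j, u q j * fderiv ℝ (fun y => G y i j) q (0, Pi.single i 1)) := by
    simp only [Finset.mul_sum]
    rw [Finset.sum_comm]
  have hperG : ∀ (j i : Fin n), fderiv ℝ (fun r => G r i j + fvec r i * u r j) q (0, Pi.single i 1)
      = fderiv ℝ (fun y => G y i j) q (0, Pi.single i 1) + fderiv ℝ (fun y => fvec y i) q (0, Pi.single i 1) * u q j + dcoef (ρ q, eI q) * (fderiv ℝ ρ q (0, Pi.single i 1) * DUval ρ m u j q (0, Pi.single i 1)) := by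
    intro j i
    have h1 := (((hGd i j q).hasPD (0, Pi.single i 1)).add
      (((hfd' i q).hasPD (0, Pi.single i 1)).mul (huP j q (0, Pi.single i 1)))).fderiv_applied
    refine h1.trans ?_
    beta_reduce
    rw [hfv i]
    ring
  have hsplitG : ∀ j : Fin n, (∑ i, fderiv ℝ (fun r => G r i j + fvec r i * u r j) q (0, Pi.single i 1))
      = (∑ i, fderiv ℝ (fun y => G y i j) q (0, Pi.single i 1)) + (∑ i, fderiv ℝ (fun y => fvec y i) q (0, Pi.single i 1)) * u q j + dcoef (ρ q, eI q) * (∑ i, fderiv ℝ ρ q (0, Pi.single i 1) * DUval ρ m u j q (0, Pi.single i 1)) := by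
    intro j
    rw [Finset.sum_mul, Finset.mul_sum, ← Finset.sum_add_distrib, ← Finset.sum_add_distrib]
    exact Finset.sum_congr rfl fun i _ => hperG j i
  have mouEq : ρ q * (∑ j, u q j * DUval ρ m u j q (1, 0)) + (∑ j, u q j ^ 2) * fderiv ℝ ρ q (1, 0)
      + (ρ q * (∑ j, u q j ^ 2) * (∑ i, DUval ρ m u i q (0, Pi.single i 1)) + ρ q * (∑ i, u q i * DKval ρ m u q (0, Pi.single i 1)) + (∑ j, u q j ^ 2) * (∑ i, u q i * fderiv ℝ ρ q (0, Pi.single i 1))) + (∑ i, u q i * fderiv ℝ (fun y => -(ρ y) ^ 2 * sRho s (ρ y, eI y) / sE s (ρ y, eI y)) q (0, Pi.single i 1))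
      - ((∑ i, ∑ j, u q j * fderiv ℝ (fun y => G y i j) q (0, Pi.single i 1)) + (∑ j, u q j ^ 2) * (∑ i, fderiv ℝ (fun y => fvec y i) q (0, Pi.single i 1)) + dcoef (ρ q, eI q) * (∑ i, fderiv ℝ ρ q (0, Pi.single i 1) * DKval ρ m u q (0, Pi.single i 1))) = 0 := by
    have h0 : ∀ j : Fin n, fderiv ℝ (fun r => m r j) q (1, 0)
        + (∑ i, fderiv ℝ (fun r => u r i * m r j) q (0, Pi.single i 1))
        + fderiv ℝ (fun y => -(ρ y) ^ 2 * sRho s (ρ y, eI y) / sE s (ρ y, eI y)) q (0, Pi.single j 1)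
        - (∑ i, fderiv ℝ (fun r => G r i j + fvec r i * u r j) q (0, Pi.single i 1)) = 0 := by
      intro j
      have h := momentum q hq j
      simp only [hpFfun, hgfun] at h
      simp only [Dt, Dx] at h
      exact h
    have h1 : ∑ j, u q j * (fderiv ℝ (fun r => m r j) q (1, 0)
        + (∑ i, fderiv ℝ (fun r => u r i * m r j) q (0, Pi.single i 1))
        + fderiv ℝ (fun y => -(ρ y) ^ 2 * sRho s (ρ y, eI y) / sE s (ρ y, eI y)) q (0, Pi.single j 1)
        - (∑ i, fderiv ℝ (fun r => G r i j + fvec r i * u r j) q (0, Pi.single i 1))) = 0 :=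
      Finset.sum_eq_zero fun j _ => by rw [h0 j, mul_zero]
    have h2 : ∀ j : Fin n, u q j * (fderiv ℝ (fun r => m r j) q (1, 0)
        + (∑ i, fderiv ℝ (fun r => u r i * m r j) q (0, Pi.single i 1))
        + fderiv ℝ (fun y => -(ρ y) ^ 2 * sRho s (ρ y, eI y) / sE s (ρ y, eI y)) q (0, Pi.single j 1)
        - (∑ i, fderiv ℝ (fun r => G r i j + fvec r i * u r j) q (0, Pi.single i 1)))
        = ρ q * (u q j * DUval ρ m u j q (1, 0)) + fderiv ℝ ρ q (1, 0) * u q j ^ 2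
          + ((ρ q * (∑ i, DUval ρ m u i q (0, Pi.single i 1))) * u q j ^ 2 + ρ q * (u q j * (∑ i, u q i * DUval ρ m u j q (0, Pi.single i 1))) + (∑ i, u q i * fderiv ℝ ρ q (0, Pi.single i 1)) * u q j ^ 2)
          + u q j * fderiv ℝ (fun y => -(ρ y) ^ 2 * sRho s (ρ y, eI y) / sE s (ρ y, eI y)) q (0, Pi.single j 1)
          - (u q j * (∑ i, fderiv ℝ (fun y => G y i j) q (0, Pi.single i 1)) + (∑ i, fderiv ℝ (fun y => fvec y i) q (0, Pi.single i 1)) * u q j ^ 2 + u q j * (dcoef (ρ q, eI q) * (∑ i, fderiv ℝ ρ q (0, Pi.single i 1) * DUval ρ m u j q (0, Pi.single i 1)))) := by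
      intro j
      rw [hsplitM j, hsplitG j, hmDq j _]
      ring
    rw [Finset.sum_congr rfl (fun j _ => h2 j)] at h1
    simp only [Finset.sum_add_distrib, Finset.sum_sub_distrib, ← Finset.mul_sum,
      ← Finset.sum_mul] at h1
    rw [hswapU, hswapRK, hswapDG] at h1
    linarith

  -- energy equation in canonical form
  have hperE : ∀ i : Fin n, fderiv ℝ (fun r => u r i * (E r + -(ρ r) ^ 2 * sRho s (ρ r, eI r) / sE s (ρ r, eI r))) q (0, Pi.single i 1)
      = (ρ q * (eI q + 1 / 2 * (∑ j, u q j ^ 2)) + -(ρ q) ^ 2 * sRho s (ρ q, eI q) / sE s (ρ q, eI q)) * DUval ρ m u i q (0, Pi.single i 1)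
        + ρ q * (u q i * Deval ρ E m u q (0, Pi.single i 1)) + ρ q * (u q i * DKval ρ m u q (0, Pi.single i 1))
        + (eI q + 1 / 2 * (∑ j, u q j ^ 2)) * (u q i * fderiv ℝ ρ q (0, Pi.single i 1)) + u q i * fderiv ℝ (fun y => -(ρ y) ^ 2 * sRho s (ρ y, eI y) / sE s (ρ y, eI y)) q (0, Pi.single i 1) := by
    intro i
    have h1 := ((huP i q (0, Pi.single i 1)).mul
      (((hEd q).hasPD (0, Pi.single i 1)).add ((hpFd q).hasPD (0, Pi.single i 1)))).fderiv_applied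
    refine h1.trans ?_
    beta_reduce
    rw [hED (0, Pi.single i 1), hEval]
    ring
  have hE2 : (∑ i, fderiv ℝ (fun r => u r i * (E r + -(ρ r) ^ 2 * sRho s (ρ r, eI r) / sE s (ρ r, eI r))) q (0, Pi.single i 1))
      = (ρ q * (eI q + 1 / 2 * (∑ j, u q j ^ 2)) + -(ρ q) ^ 2 * sRho s (ρ q, eI q) / sE s (ρ q, eI q)) * (∑ i, DUval ρ m u i q (0, Pi.single i 1))
        + ρ q * (∑ i, u q i * Deval ρ E m u q (0, Pi.single i 1)) + ρ q * (∑ i, u q i * DKval ρ m u q (0, Pi.single i 1)) + (eI q + 1 / 2 * (∑ j, u q j ^ 2)) * (∑ i, u q i * fderiv ℝ ρ q (0, Pi.single i 1)) + (∑ i, u q i * fderiv ℝ (fun y => -(ρ y) ^ 2 * sRho s (ρ y, eI y) / sE s (ρ y, eI y)) q (0, Pi.single i 1)) := by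
    rw [Finset.sum_congr rfl fun i _ => hperE i]
    simp only [Finset.sum_add_distrib, ← Finset.mul_sum]
  have hperH : ∀ i : Fin n,
      fderiv ℝ (fun r => lvec r i + 1 / 2 * (∑ k, u r k ^ 2) * fvec r i + ∑ j, G r i j * u r j) q (0, Pi.single i 1)
      = fderiv ℝ (fun y => lvec y i) q (0, Pi.single i 1) + dcoef (ρ q, eI q) * (fderiv ℝ ρ q (0, Pi.single i 1) * DKval ρ m u q (0, Pi.single i 1)) + 1 / 2 * (∑ j, u q j ^ 2) * fderiv ℝ (fun y => fvec y i) q (0, Pi.single i 1)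
        + ((∑ j, u q j * fderiv ℝ (fun y => G y i j) q (0, Pi.single i 1)) + (∑ j, G q i j * DUval ρ m u j q (0, Pi.single i 1))) := by
    intro i
    have hin : ∀ j ∈ Finset.univ, HasPD (fun y => G y i j * u y j) q (0, Pi.single i 1)
        (fderiv ℝ (fun y => G y i j) q (0, Pi.single i 1) * u q j + G q i j * DUval ρ m u j q (0, Pi.single i 1)) :=
      fun j _ => ((hGd i j q).hasPD (0, Pi.single i 1)).mul (huP j q (0, Pi.single i 1))
    have h1 := ((((hld i q).hasPD (0, Pi.single i 1)).add
      ((hkP q (0, Pi.single i 1)).mul ((hfd' i q).hasPD (0, Pi.single i 1)))).add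
      (HasPD.finsum Finset.univ hin)).fderiv_applied
    refine h1.trans ?_
    beta_reduce
    rw [hfv i, Finset.sum_add_distrib]
    have h2 : ∑ j, fderiv ℝ (fun y => G y i j) q (0, Pi.single i 1) * u q j = ∑ j, u q j * fderiv ℝ (fun y => G y i j) q (0, Pi.single i 1) :=
      Finset.sum_congr rfl fun j _ => by ring
    rw [h2]
    ring
  have hE3 : (∑ i, fderiv ℝ (fun r => lvec r i + 1 / 2 * (∑ k, u r k ^ 2) * fvec r i + ∑ j, G r i j * u r j) q (0, Pi.single i 1))
      = (∑ i, fderiv ℝ (fun y => lvec y i) q (0, Pi.single i 1)) + dcoef (ρ q, eI q) * (∑ i, fderiv ℝ ρ q (0, Pi.single i 1) * DKval ρ m u q (0, Pi.single i 1)) + 1 / 2 * (∑ j, u q j ^ 2) * (∑ i, fderiv ℝ (fun y => fvec y i) q (0, Pi.single i 1)) + ((∑ i, ∑ j, u q j * fderiv ℝ (fun y => G y i j) q (0, Pi.single i 1)) + (∑ i, ∑ j, G q i j * DUval ρ m u j q (0, Pi.single i 1))) := by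
    rw [Finset.sum_congr rfl fun i _ => hperH i]
    simp only [Finset.sum_add_distrib, ← Finset.mul_sum]
  have hKt : DKval ρ m u q (1, 0) = ∑ j, u q j * DUval ρ m u j q (1, 0) := rfl
  have enEq : (ρ q * Deval ρ E m u q (1, 0) + ρ q * (∑ j, u q j * DUval ρ m u j q (1, 0)) + (eI q + 1 / 2 * (∑ j, u q j ^ 2)) * fderiv ℝ ρ q (1, 0))
      + ((ρ q * (eI q + 1 / 2 * (∑ j, u q j ^ 2)) + -(ρ q) ^ 2 * sRho s (ρ q, eI q) / sE s (ρ q, eI q)) * (∑ i, DUval ρ m u i q (0, Pi.single i 1))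
        + ρ q * (∑ i, u q i * Deval ρ E m u q (0, Pi.single i 1)) + ρ q * (∑ i, u q i * DKval ρ m u q (0, Pi.single i 1)) + (eI q + 1 / 2 * (∑ j, u q j ^ 2)) * (∑ i, u q i * fderiv ℝ ρ q (0, Pi.single i 1)) + (∑ i, u q i * fderiv ℝ (fun y => -(ρ y) ^ 2 * sRho s (ρ y, eI y) / sE s (ρ y, eI y)) q (0, Pi.single i 1)))
      - ((∑ i, fderiv ℝ (fun y => lvec y i) q (0, Pi.single i 1)) + dcoef (ρ q, eI q) * (∑ i, fderiv ℝ ρ q (0, Pi.single i 1) * DKval ρ m u q (0, Pi.single i 1)) + 1 / 2 * (∑ j, u q j ^ 2) * (∑ i, fderiv ℝ (fun y => fvec y i) q (0, Pi.single i 1)) + ((∑ i, ∑ j, u q j * fderiv ℝ (fun y => G y i j) q (0, Pi.single i 1)) + (∑ i, ∑ j, G q i j * DUval ρ m u j q (0, Pi.single i 1)))) = 0 := by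
    have h0 := energy q hq
    simp only [hpFfun] at h0
    simp only [hhgfun] at h0
    simp only [Dt, Dx] at h0
    rw [hED (1, 0), hKt, hE2, hE3] at h0
    linarith

  -- G-flux positivity in canonical form
  have hGU : (∑ i, ∑ j, G q i j * Dx i (fun r => u r j) q) = (∑ i, ∑ j, G q i j * DUval ρ m u j q (0, Pi.single i 1)) := by
    refine Finset.sum_congr rfl fun i _ => Finset.sum_congr rfl fun j _ => ?_
    rw [show Dx i (fun r => u r j) q = DUval ρ m u j q (0, Pi.single i 1) from
      (huP j q (0, Pi.single i 1)).fderiv_applied]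
  -- rewrite the flux functions in the goal
  have hfluxfun : ∀ i : Fin n, (fun r => u r i * (ρ r * F (s (ρ r, eI r)))
        - dcoef (ρ r, eI r) * ρ r * Dx i (fun r' => F (s (ρ r', eI r'))) r
        - acoef (ρ r, eI r) * F (s (ρ r, eI r)) * Dx i ρ r)
      = (fun r => u r i * (ρ r * F (s (ρ r, eI r))) - deriv F (s (ρ r, eI r)) * sE s (ρ r, eI r) * (lvec r i - (sE s (ρ r, eI r))⁻¹ * (eI r * sE s (ρ r, eI r) - ρ r * sRho s (ρ r, eI r)) * fvec r i) - F (s (ρ r, eI r)) * fvec r i) := by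
    intro i
    funext r
    have h2 : acoef (ρ r, eI r) * F (s (ρ r, eI r)) * Dx i ρ r
        = F (s (ρ r, eI r)) * fvec r i := by
      rw [hfdef r i]
      ring
    have hDxF : Dx i (fun r' => F (s (ρ r', eI r'))) r
        = deriv F (s (ρ r, eI r)) * (sRho s (ρ r, eI r) * fderiv ℝ ρ r (0, Pi.single i 1)
          + sE s (ρ r, eI r) * Deval ρ E m u r (0, Pi.single i 1)) :=
      (hFSP r (0, Pi.single i 1)).fderiv_applied
    have hl := hldef r i
    simp only [hseF, hsρF, hSfun, Dx, had] at hl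
    rw [(hSP r (0, Pi.single i 1)).fderiv_applied] at hl
    have h3 : dcoef (ρ r, eI r) * ρ r * Dx i (fun r' => F (s (ρ r', eI r'))) r
        = deriv F (s (ρ r, eI r)) * sE s (ρ r, eI r) *
            (lvec r i - (sE s (ρ r, eI r))⁻¹ * (eI r * sE s (ρ r, eI r)
              - ρ r * sRho s (ρ r, eI r)) * fvec r i) := by
      rw [hDxF, hl]
      field_simp [hsene r]
      ring
    rw [h2, h3]
  -- per-direction expansion of the flux divergence
  have hfluxD : ∀ i : Fin n, fderiv ℝ (fun r => u r i * (ρ r * F (s (ρ r, eI r))) - deriv F (s (ρ r, eI r)) * sE s (ρ r, eI r) * (lvec r i - (sE s (ρ r, eI r))⁻¹ * (eI r * sE s (ρ r, eI r) - ρ r * sRho s (ρ r, eI r)) * fvec r i) - F (s (ρ r, eI r)) * fvec r i) q (0, Pi.single i 1) = ρ q * F (s (ρ q, eI q)) * DUval ρ m u i q (0, Pi.single i 1) + (F (s (ρ q, eI q)) + ρ q * deriv F (s (ρ q, eI q)) * sRho s (ρ q, eI q)) * (u q i * fderiv ℝ ρ q (0, Pi.single i 1)) + ρ q * deriv F (s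 (ρ q, eI q)) * sE s (ρ q, eI q) * (u q i * Deval ρ E m u q (0, Pi.single i 1)) + (-(dcoef (ρ q, eI q) * (deriv F (s (ρ q, eI q)) * (2 * sRho s (ρ q, eI q) + ρ q * D1 (D1 s) (ρ q, eI q)) + ρ q * deriv (deriv F) (s (ρ q, eI q)) * sRho s (ρ q, eI q) ^ 2))) * fderiv ℝ ρ q (0, Pi.single i 1) ^ 2 + (-(dcoef (ρ q, eI q) * (2 * (ρ q * (deriv F (s (ρ q, eI q)) * sRhoE s (ρ q, eI q) + deriv (deriv F) (s (ρ q, eI q)) * sRho s (ρ q, eI q) * sE s (ρ q, eI q)))))) * (fderiv ℝ ρ q (0, Pi.single i 1) * Deval ρ E m u q (0, Pi.single i 1)) + (-(dcoef (ρ q, eI q) * (ρ q * (deriv F (s (ρ q, eI q)) * sEE s (ρ q, eI q) + deriv (deriv F) (s (ρ q, eI q)) * sE s (ρ q, eI q) ^ 2)))) * Deval ρ E m u q (0, Pi.single i 1) ^ 2 + (-(deriv F (s (ρ q, eI q)) * sE s (ρ q, eI q))) * fderiv ℝ (fun y => lvec y i) q (0, Pi.single i 1) + (deriv F (s (ρ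 q, eI q)) * (eI q * sE s (ρ q, eI q) - ρ q * sRho s (ρ q, eI q)) - F (s (ρ q, eI q))) * fderiv ℝ (fun y => fvec y i) q (0, Pi.single i 1) := by
    intro i
    have h1 := (((huP i q (0, Pi.single i 1)).mul
        (((hρd q).hasPD (0, Pi.single i 1)).mul (hFSP q (0, Pi.single i 1)))).sub
      (((hF'SP q (0, Pi.single i 1)).mul (hseFP q (0, Pi.single i 1))).mul
        ((((hld i q).hasPD (0, Pi.single i 1))).sub
          ((hφP q (0, Pi.single i 1)).mul ((hfd' i q).hasPD (0, Pi.single i 1)))))).sub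
      ((hFSP q (0, Pi.single i 1)).mul ((hfd' i q).hasPD (0, Pi.single i 1)))
    refine h1.fderiv_applied.trans ?_
    beta_reduce
    rw [hwv i, hfv i]
    field_simp
    ring
  have hsumflux : (∑ i, fderiv ℝ (fun r => u r i * (ρ r * F (s (ρ r, eI r))) - deriv F (s (ρ r, eI r)) * sE s (ρ r, eI r) * (lvec r i - (sE s (ρ r, eI r))⁻¹ * (eI r * sE s (ρ r, eI r) - ρ r * sRho s (ρ r, eI r)) * fvec r i) - F (s (ρ r, eI r)) * fvec r i) q (0, Pi.single i 1)) = ρ q * F (s (ρ q, eI q)) * (∑ i, DUval ρ m u i q (0, Pi.single i 1)) + (F (s (ρ q, eI q)) + ρ q * deriv F (s (ρ q, eI q)) * sRho s (ρ q, eI q)) * (∑ i, u q i * fderiv ℝ ρ q (0, Pi.single i 1)) + ρ q * deriv F (s (ρ q, eI q)) * sE s (ρ q, eI q) * (∑ i, u q i * Deval ρ E m u q (0, Pi.single i 1)) + (-(dcoef (ρ q, eI q) * (deriv F (s (ρ q, eI q)) * (2 * sRho s (ρ q, eI q) + ρ q * D1 (D1 s) (ρ q, eI q)) + ρ q * deriv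 (deriv F) (s (ρ q, eI q)) * sRho s (ρ q, eI q) ^ 2))) * (∑ i, fderiv ℝ ρ q (0, Pi.single i 1) ^ 2) + (-(dcoef (ρ q, eI q) * (2 * (ρ q * (deriv F (s (ρ q, eI q)) * sRhoE s (ρ q, eI q) + deriv (deriv F) (s (ρ q, eI q)) * sRho s (ρ q, eI q) * sE s (ρ q, eI q)))))) * (∑ i, fderiv ℝ ρ q (0, Pi.single i 1) * Deval ρ E m u q (0, Pi.single i 1)) + (-(dcoef (ρ q, eI q) * (ρ q * (deriv F (s (ρ q, eI q)) * sEE s (ρ q, eI q) + deriv (deriv F) (s (ρ q, eI q)) * sE s (ρ q, eI q) ^ 2)))) * (∑ i, Deval ρ E m u q (0, Pi.single i 1) ^ 2) + (-(deriv F (s (ρ q, eI q)) * sE s (ρ q, eI q))) * (∑ i, fderiv ℝ (fun y => lvec y i) q (0, Pi.single i 1)) + (deriv F (s (ρ q, eI q)) * (eI q * sE s (ρ q, eI q) - ρ q * sRho s (ρ q, eI q)) - F (s (ρ q, eI q))) * (∑ i, fderiv ℝ (fun y => fvec y i) q (0, Pi.single i 1)) := by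
    rw [Finset.sum_congr rfl fun i _ => hfluxD i]
    simp only [Finset.sum_add_distrib, ← Finset.mul_sum]
  have htime : fderiv ℝ (fun r => ρ r * F (s (ρ r, eI r))) q (1, 0) = fderiv ℝ ρ q (1, 0) * F (s (ρ q, eI q)) + ρ q * (deriv F (s (ρ q, eI q)) * (sRho s (ρ q, eI q) * fderiv ℝ ρ q (1, 0) + sE s (ρ q, eI q) * Deval ρ E m u q (1, 0))) :=
    (((hρd q).hasPD (1, 0)).mul (hFSP q (1, 0))).fderiv_applied
  have hse1 : sE s (ρ q, eI q) * (sE s (ρ q, eI q))⁻¹ = 1 := mul_inv_cancel₀ (ne_of_gt hse0)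
  have master : fderiv ℝ (fun r => ρ r * F (s (ρ r, eI r))) q (1, 0)
      + (∑ i, fderiv ℝ (fun r => u r i * (ρ r * F (s (ρ r, eI r))) - deriv F (s (ρ r, eI r)) * sE s (ρ r, eI r) * (lvec r i - (sE s (ρ r, eI r))⁻¹ * (eI r * sE s (ρ r, eI r) - ρ r * sRho s (ρ r, eI r)) * fvec r i) - F (s (ρ r, eI r)) * fvec r i) q (0, Pi.single i 1)) = deriv F (s (ρ q, eI q)) * sE s (ρ q, eI q) * (∑ i, ∑ j, G q i j * DUval ρ m u j q (0, Pi.single i 1)) - dcoef (ρ q, eI q) * ((deriv F (s (ρ q, eI q)) * (2 * sRho s (ρ q, eI q) + ρ q * D1 (D1 s) (ρ q, eI q)) + ρ q * deriv (deriv F) (s (ρ q, eI q)) * sRho s (ρ q, eI q) ^ 2) * (∑ i, fderiv ℝ ρ q (0, Pi.single i 1) ^ 2) + 2 * (ρ q * (deriv F (s (ρ q, eI q)) * sRhoE s (ρ q, eI q) + deriv (deriv F) (s (ρ q, eI q)) * sRho s (ρ q, eI q) * sE s (ρ q, eI q))) * (∑ i, fderiv ℝ ρ q (0, Pi.single i 1)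 * Deval ρ E m u q (0, Pi.single i 1)) + (ρ q * (deriv F (s (ρ q, eI q)) * sEE s (ρ q, eI q) + deriv (deriv F) (s (ρ q, eI q)) * sE s (ρ q, eI q) ^ 2)) * (∑ i, Deval ρ E m u q (0, Pi.single i 1) ^ 2)) := by
    rw [htime, hsumflux]
    linear_combination (F (s (ρ q, eI q)) + ρ q * deriv F (s (ρ q, eI q)) * sRho s (ρ q, eI q) - (eI q - 1 / 2 * (∑ j, u q j ^ 2)) * (deriv F (s (ρ q, eI q)) * sE s (ρ q, eI q))) * massEq + (deriv F (s (ρ q, eI q)) * sE s (ρ q, eI q)) * enEq - (deriv F (s (ρ q, eI q)) * sE s (ρ q, eI q)) * mouEq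
      + (deriv F (s (ρ q, eI q)) * ρ q ^ 2 * sRho s (ρ q, eI q) * (∑ i, DUval ρ m u i q (0, Pi.single i 1))) * hse1
  -- positivity
  obtain ⟨hc1, hc2, hc3⟩ := hconv (ρ q, eI q) hψq
  have hσeq : dRho2sRho s (ρ q, eI q) = 2 * ρ q * sRho s (ρ q, eI q) + ρ q ^ 2 * D1 (D1 s) (ρ q, eI q) :=
    dRho2sRho_eq hs hψq
  have hdeteq : detSigma s (ρ q, eI q)
      = dRho2sRho s (ρ q, eI q) * sEE s (ρ q, eI q) - ρ q ^ 2 * sRhoE s (ρ q, eI q) ^ 2 := rfl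
  have hσ2 : 2 * ρ q * sRho s (ρ q, eI q) + ρ q ^ 2 * D1 (D1 s) (ρ q, eI q) < 0 := by rw [← hσeq]; exact hc1
  have hdet2 : 0 < (2 * ρ q * sRho s (ρ q, eI q) + ρ q ^ 2 * D1 (D1 s) (ρ q, eI q)) * sEE s (ρ q, eI q) - ρ q ^ 2 * sRhoE s (ρ q, eI q) ^ 2 := by
    rw [← hσeq]
    rw [hdeteq] at hc3
    exact hc3
  have hBq : (2 * ρ q * sRho s (ρ q, eI q) + ρ q ^ 2 * D1 (D1 s) (ρ q, eI q)) * sE s (ρ q, eI q) ^ 2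
      - 2 * ρ q ^ 2 * sRho s (ρ q, eI q) * sE s (ρ q, eI q) * sRhoE s (ρ q, eI q) + ρ q ^ 2 * sRho s (ρ q, eI q) ^ 2 * sEE s (ρ q, eI q) < 0 :=
    Bq_neg (hρpos q) hse0 hσ2 hdet2
  have hcp2 : cP s (ρ q, eI q)
      = -((2 * ρ q * sRho s (ρ q, eI q) + ρ q ^ 2 * D1 (D1 s) (ρ q, eI q)) * sE s (ρ q, eI q) ^ 2
          - 2 * ρ q ^ 2 * sRho s (ρ q, eI q) * sE s (ρ q, eI q) * sRhoE s (ρ q, eI q) + ρ q ^ 2 * sRho s (ρ q, eI q) ^ 2 * sEE s (ρ q, eI q))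
        / ((2 * ρ q * sRho s (ρ q, eI q) + ρ q ^ 2 * D1 (D1 s) (ρ q, eI q)) * sEE s (ρ q, eI q) - ρ q ^ 2 * sRhoE s (ρ q, eI q) ^ 2) := by
    have h := cP_formula hs hψq (ne_of_gt hse0) (ne_of_gt hc3)
    rw [h, hdeteq, hσeq]
  have hcpq := hF'' (ρ q, eI q) hψq
  have hfd2 : 0 < deriv F (s (ρ q, eI q)) * ((2 * ρ q * sRho s (ρ q, eI q) + ρ q ^ 2 * D1 (D1 s) (ρ q, eI q)) * sEE s (ρ q, eI q) - ρ q ^ 2 * sRhoE s (ρ q, eI q) ^ 2)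
      + deriv (deriv F) (s (ρ q, eI q)) * ((2 * ρ q * sRho s (ρ q, eI q) + ρ q ^ 2 * D1 (D1 s) (ρ q, eI q)) * sE s (ρ q, eI q) ^ 2
        - 2 * ρ q ^ 2 * sRho s (ρ q, eI q) * sE s (ρ q, eI q) * sRhoE s (ρ q, eI q) + ρ q ^ 2 * sRho s (ρ q, eI q) ^ 2 * sEE s (ρ q, eI q)) := by
    rw [hcp2, inv_div] at hcpq
    have hnegB : 0 < -((2 * ρ q * sRho s (ρ q, eI q) + ρ q ^ 2 * D1 (D1 s) (ρ q, eI q)) * sE s (ρ q, eI q) ^ 2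
        - 2 * ρ q ^ 2 * sRho s (ρ q, eI q) * sE s (ρ q, eI q) * sRhoE s (ρ q, eI q) + ρ q ^ 2 * sRho s (ρ q, eI q) ^ 2 * sEE s (ρ q, eI q)) := by linarith
    have h3 : deriv (deriv F) (s (ρ q, eI q)) < deriv F (s (ρ q, eI q)) * (((2 * ρ q * sRho s (ρ q, eI q) + ρ q ^ 2 * D1 (D1 s) (ρ q, eI q)) * sEE s (ρ q, eI q) - ρ q ^ 2 * sRhoE s (ρ q, eI q) ^ 2)
        / -((2 * ρ q * sRho s (ρ q, eI q) + ρ q ^ 2 * D1 (D1 s) (ρ q, eI q)) * sE s (ρ q, eI q) ^ 2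
          - 2 * ρ q ^ 2 * sRho s (ρ q, eI q) * sE s (ρ q, eI q) * sRhoE s (ρ q, eI q) + ρ q ^ 2 * sRho s (ρ q, eI q) ^ 2 * sEE s (ρ q, eI q))) := by linarith
    rw [← mul_div_assoc] at h3
    have h4 := (lt_div_iff₀ hnegB).mp h3
    nlinarith [h4]
  have hquadi : ∀ i : Fin n, (deriv F (s (ρ q, eI q)) * (2 * sRho s (ρ q, eI q) + ρ q * D1 (D1 s) (ρ q, eI q)) + ρ q * deriv (deriv F) (s (ρ q, eI q)) * sRho s (ρ q, eI q) ^ 2) * fderiv ℝ ρ q (0, Pi.single i 1) ^ 2 + 2 * (ρ q * (deriv F (s (ρ q, eI q)) * sRhoE s (ρ q, eI q) + deriv (deriv F) (s (ρ q, eI q)) * sRho s (ρ q, eI q) * sE s (ρ q, eI q))) * (fderiv ℝ ρ q (0, Pi.single i 1) * Deval ρ E m u q (0, Pi.single i 1))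
      + (ρ q * (deriv F (s (ρ q, eI q)) * sEE s (ρ q, eI q) + deriv (deriv F) (s (ρ q, eI q)) * sE s (ρ q, eI q) ^ 2)) * Deval ρ E m u q (0, Pi.single i 1) ^ 2 ≤ 0 :=
    fun i => quad_nonpos (hρpos q) hse0 (hF' (ρ q, eI q) hψq) hσ2 hdet2 hfd2 _ _
  have hQs : (deriv F (s (ρ q, eI q)) * (2 * sRho s (ρ q, eI q) + ρ q * D1 (D1 s) (ρ q, eI q)) + ρ q * deriv (deriv F) (s (ρ q, eI q)) * sRho s (ρ q, eI q) ^ 2) * (∑ i, fderiv ℝ ρ q (0, Pi.single i 1) ^ 2) + 2 * (ρ q * (deriv F (s (ρ q, eI q)) * sRhoE s (ρ q, eI q) + deriv (deriv F) (s (ρ q, eI q)) * sRho s (ρ q, eI q) * sE s (ρ q, eI q))) * (∑ i, fderiv ℝ ρ q (0, Pi.single i 1) * Deval ρ E m u q (0, Pi.single i 1)) + (ρ q * (deriv F (s (ρ q, eI q)) * sEE s (ρ q, eI q) + deriv (deriv F) (s (ρ q, eI q)) * sE s (ρ q, eI q) ^ 2)) * (∑ i, Deval ρ E m u q (0, Pi.single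 i 1) ^ 2) ≤ 0 := by
    have hsum : (deriv F (s (ρ q, eI q)) * (2 * sRho s (ρ q, eI q) + ρ q * D1 (D1 s) (ρ q, eI q)) + ρ q * deriv (deriv F) (s (ρ q, eI q)) * sRho s (ρ q, eI q) ^ 2) * (∑ i, fderiv ℝ ρ q (0, Pi.single i 1) ^ 2) + 2 * (ρ q * (deriv F (s (ρ q, eI q)) * sRhoE s (ρ q, eI q) + deriv (deriv F) (s (ρ q, eI q)) * sRho s (ρ q, eI q) * sE s (ρ q, eI q))) * (∑ i, fderiv ℝ ρ q (0, Pi.single i 1) * Deval ρ E m u q (0, Pi.single i 1)) + (ρ q * (deriv F (s (ρ q, eI q)) * sEE s (ρ q, eI q) + deriv (deriv F) (s (ρ q, eI q)) * sE s (ρ q, eI q) ^ 2)) * (∑ i, Deval ρ E m u q (0, Pi.single i 1) ^ 2)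
        = ∑ i, ((deriv F (s (ρ q, eI q)) * (2 * sRho s (ρ q, eI q) + ρ q * D1 (D1 s) (ρ q, eI q)) + ρ q * deriv (deriv F) (s (ρ q, eI q)) * sRho s (ρ q, eI q) ^ 2) * fderiv ℝ ρ q (0, Pi.single i 1) ^ 2 + 2 * (ρ q * (deriv F (s (ρ q, eI q)) * sRhoE s (ρ q, eI q) + deriv (deriv F) (s (ρ q, eI q)) * sRho s (ρ q, eI q) * sE s (ρ q, eI q))) * (fderiv ℝ ρ q (0, Pi.single i 1) * Deval ρ E m u q (0, Pi.single i 1)) + (ρ q * (deriv F (s (ρ q, eI q)) * sEE s (ρ q, eI q) + deriv (deriv F) (s (ρ q, eI q)) * sE s (ρ q, eI q) ^ 2)) * Deval ρ E m u q (0, Pi.single i 1) ^ 2) := by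
      simp only [Finset.sum_add_distrib, ← Finset.mul_sum]
    rw [hsum]
    exact Finset.sum_nonpos fun i _ => hquadi i
  have hGUpos : (0:ℝ) ≤ (∑ i, ∑ j, G q i j * DUval ρ m u j q (0, Pi.single i 1)) := by
    have h := hGpos q hq
    rwa [hGU] at h
  -- final assembly
  simp only [hSfun]
  simp only [hfluxfun]
  simp only [Dt, Dx]
  rw [master]
  have h1 : (0:ℝ) ≤ deriv F (s (ρ q, eI q)) * sE s (ρ q, eI q) * (∑ i, ∑ j, G q i j * DUval ρ m u j q (0, Pi.single i 1)) :=
    mul_nonneg (mul_nonneg (hF' (ρ q, eI q) hψq).le hse0.le) hGUpos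
  have h2 := mul_le_mul_of_nonneg_left hQs (hdc (ρ q, eI q))
  rw [mul_zero] at h2
  linarith
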